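/- Every 3 × 3 doubly stochastic matrix can be written as a convex combination of the six 3 × 3 permutation matrices (Birkhoff–von Neumann in dimension 3). -/

import Mathlib

open Finset

/-- Birkhoff–von Neumann in dimension 3: every `3 × 3` doubly stochastic matrix
is a convex combination of the six `3 × 3` permutation matrices. -/
theorem birkhoff_dim_three (M : Matrix (Fin 3) (Fin 3) ℝ)
    (hnonneg : ∀ i j, 0 ≤ M i j)
    (hrow : ∀ i, ∑ j, M i j = 1) (hcol : ∀ j, ∑ i, M i j = 1) :
    ∃ w : Equiv.Perm (Fin 3) → ℝ, (∀ σ, 0 ≤ w σ) ∧ ∑ σ, w σ = 1 ∧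
      M = ∑ σ, w σ • σ.permMatrix ℝ := by
  have hr0 := hrow 0; have hr1 := hrow 1; have hr2 := hrow 2
  have hc0 := hcol 0; have hc1 := hcol 1; have hc2 := hcol 2
  simp [Fin.sum_univ_three] at hr0 hr1 hr2 hc0 hc1 hc2
  set t : ℝ := max 0 (max (M 2 2 - M 1 0) (M 2 2 - M 0 1)) with ht
  have ht0 : 0 ≤ t := le_max_left _ _
  have ht1 : M 2 2 - M 1 0 ≤ t := le_trans (le_max_left _ _) (le_max_right _ _)
  have ht2 : M 2 2 - M 0 1 ≤ t := le_trans (le_max_right _ _) (le_max_right _ _)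
  have ht3 : t ≤ M 0 0 := by
    apply max_le (hnonneg 0 0)
    apply max_le <;>
      linarith [hnonneg 2 0, hnonneg 2 1, hnonneg 0 2, hnonneg 0 1, hnonneg 1 0, hnonneg 1 2]
  have ht4 : t ≤ M 1 1 := by
    apply max_le (hnonneg 1 1)
    apply max_le <;>
      linarith [hnonneg 2 0, hnonneg 2 1, hnonneg 0 2, hnonneg 0 1, hnonneg 1 0, hnonneg 1 2]
  have ht5 : t ≤ M 2 2 := by
    apply max_le (hnonneg 2 2)
    apply max_le <;> linarith [hnonneg 1 0, hnonneg 0 1]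
  refine ⟨fun σ => if σ = 1 then t else if σ = Equiv.swap 1 2 then M 0 0 - t
    else if σ = Equiv.swap 0 1 then M 2 2 - t else if σ = Equiv.swap 0 2 then M 1 1 - t
    else if σ = Equiv.swap 0 2 * Equiv.swap 0 1 then M 0 1 - M 2 2 + t
    else M 1 0 - M 2 2 + t, ?_, ?_, ?_⟩
  · intro σ
    dsimp only
    split_ifs <;> linarith
  · rw [show (univ : Finset (Equiv.Perm (Fin 3))) = {1, Equiv.swap 1 2, Equiv.swap 0 1,
      Equiv.swap 0 2, Equiv.swap 0 2 * Equiv.swap 0 1, Equiv.swap 0 1 * Equiv.swap 0 2}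
      from by decide]
    rw [Finset.sum_insert (by decide), Finset.sum_insert (by decide),
      Finset.sum_insert (by decide), Finset.sum_insert (by decide),
      Finset.sum_insert (by decide), Finset.sum_singleton]
    norm_num [show (Equiv.swap 1 2 : Equiv.Perm (Fin 3)) ≠ 1 from by decide,
      show (Equiv.swap 0 1 : Equiv.Perm (Fin 3)) ≠ 1 from by decide,
      show (Equiv.swap 0 2 : Equiv.Perm (Fin 3)) ≠ 1 from by decide,
      show (Equiv.swap 0 1 : Equiv.Perm (Fin 3)) ≠ Equiv.swap 1 2 from by decide,
      show (Equiv.swap 0 2 : Equiv.Perm (Fin 3)) ≠ Equiv.swap 1 2 from by decide,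
      show (Equiv.swap 0 2 : Equiv.Perm (Fin 3)) ≠ Equiv.swap 0 1 from by decide,
      show (Equiv.swap 0 2 * Equiv.swap 0 1 : Equiv.Perm (Fin 3)) ≠ 1 from by decide,
      show (Equiv.swap 0 2 * Equiv.swap 0 1 : Equiv.Perm (Fin 3)) ≠ Equiv.swap 1 2 from by decide,
      show (Equiv.swap 0 2 * Equiv.swap 0 1 : Equiv.Perm (Fin 3)) ≠ Equiv.swap 0 1 from by decide,
      show (Equiv.swap 0 2 * Equiv.swap 0 1 : Equiv.Perm (Fin 3)) ≠ Equiv.swap 0 2 from by decide,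
      show (Equiv.swap 0 1 * Equiv.swap 0 2 : Equiv.Perm (Fin 3)) ≠ 1 from by decide,
      show (Equiv.swap 0 1 * Equiv.swap 0 2 : Equiv.Perm (Fin 3)) ≠ Equiv.swap 1 2 from by decide,
      show (Equiv.swap 0 1 * Equiv.swap 0 2 : Equiv.Perm (Fin 3)) ≠ Equiv.swap 0 1 from by decide,
      show (Equiv.swap 0 1 * Equiv.swap 0 2 : Equiv.Perm (Fin 3)) ≠ Equiv.swap 0 2 from by decide,
      show (Equiv.swap 0 1 * Equiv.swap 0 2 : Equiv.Perm (Fin 3)) ≠ Equiv.swap 0 2 * Equiv.swap 0 1 from by decide]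
    linarith
  · have huniv : (univ : Finset (Equiv.Perm (Fin 3))) = {1, Equiv.swap 1 2, Equiv.swap 0 1,
        Equiv.swap 0 2, Equiv.swap 0 2 * Equiv.swap 0 1, Equiv.swap 0 1 * Equiv.swap 0 2} := by
      decide
    rw [huniv, Finset.sum_insert (by decide), Finset.sum_insert (by decide),
      Finset.sum_insert (by decide), Finset.sum_insert (by decide),
      Finset.sum_insert (by decide), Finset.sum_singleton]
    ext i j
    fin_cases i <;> fin_cases j <;>
      simp (config := { decide := true }) [Matrix.add_apply, Matrix.smul_apply,
        Equiv.Perm.permMatrix, PEquiv.toMatrix_apply, Equiv.toPEquiv_apply,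
        Option.mem_def, smul_eq_mul, Matrix.mul_apply, Fin.sum_univ_three] <;>
      linarith
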